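/- If (N, m) is integer unbounded for a nonredundant workflow net N and some m ∈ ℕ^P, then N is not continuously sound. -/

import Mathlib

structure PetriNet (P T : Type) [Fintype P] [Fintype T] where
  pre : T → P → ℕ
  post : T → P → ℕ

variable {P T : Type} [Fintype P] [Fintype T] [DecidableEq P]

namespace PetriNet

def enabled (N : PetriNet P T) (t : T) (m : P → ℕ) : Prop := ∀ p, N.pre t p ≤ m p

def fires (N : PetriNet P T) (m m' : P → ℕ) : Prop :=
  ∃ t, N.enabled t m ∧ ∀ p, m' p = m p + N.post t p - N.pre t p

def reach (N : PetriNet P T) : (P → ℕ) → (P → ℕ) → Prop := Relation.ReflTransGen N.fires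

def zfires (N : PetriNet P T) (m m' : P → ℤ) : Prop :=
  ∃ t, ∀ p, m' p = m p + (N.post t p : ℤ) - (N.pre t p : ℤ)

def zreach (N : PetriNet P T) : (P → ℤ) → (P → ℤ) → Prop := Relation.ReflTransGen N.zfires

def cfires (N : PetriNet P T) (m m' : P → ℚ) : Prop :=
  ∃ t, ∃ l : ℚ, 0 < l ∧ l ≤ 1 ∧ (∀ p, l * (N.pre t p : ℚ) ≤ m p) ∧
    ∀ p, m' p = m p + l * ((N.post t p : ℚ) - (N.pre t p : ℚ))

def creach (N : PetriNet P T) : (P → ℚ) → (P → ℚ) → Prop := Relation.ReflTransGen N.cfires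

def bounded (N : PetriNet P T) (m : P → ℕ) : Prop :=
  ∃ b : ℕ, ∀ m', N.reach m m' → ∀ p, m' p ≤ b

def zbounded (N : PetriNet P T) (m : P → ℕ) : Prop :=
  ∃ b : ℕ, ∀ m' : P → ℤ, N.zreach (fun p => (m p : ℤ)) m' → (∀ p, 0 ≤ m' p) →
    ∀ p, m' p ≤ (b : ℤ)

def quasiLive (N : PetriNet P T) (m : P → ℕ) (t : T) : Prop :=
  ∃ m', N.reach m m' ∧ N.enabled t m'

def live (N : PetriNet P T) (m : P → ℕ) (t : T) : Prop :=
  ∀ m', N.reach m m' → N.quasiLive m' t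

def freeChoice (N : PetriNet P T) : Prop :=
  ∀ s t : T, (∀ p, N.pre s p = 0 ∨ N.pre t p = 0) ∨ N.pre s = N.pre t

def edge (N : PetriNet P T) : (P ⊕ T) → (P ⊕ T) → Prop
  | Sum.inl p, Sum.inr t => 0 < N.pre t p
  | Sum.inr t, Sum.inl p => 0 < N.post t p
  | _, _ => False

end PetriNet

/-- The marking with `k` tokens in place `p` and none elsewhere. -/
def mk1 (p : P) (k : ℕ) : P → ℕ := fun q => if q = p then k else 0

/-- The continuous marking with `k` tokens in place `p` and none elsewhere. -/
def mkQ (p : P) (k : ℚ) : P → ℚ := fun q => if q = p then k else 0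

structure WorkflowNet (P T : Type) [Fintype P] [Fintype T] extends PetriNet P T where
  i : P
  f : P
  i_ne_f : i ≠ f
  no_into_initial : ∀ t, toPetriNet.post t i = 0
  no_from_final : ∀ t, toPetriNet.pre t f = 0
  place_on_path : ∀ p : P,
    Relation.ReflTransGen toPetriNet.edge (Sum.inl i) (Sum.inl p) ∧
    Relation.ReflTransGen toPetriNet.edge (Sum.inl p) (Sum.inl f)
  trans_on_path : ∀ t : T,
    Relation.ReflTransGen toPetriNet.edge (Sum.inl i) (Sum.inr t) ∧
    Relation.ReflTransGen toPetriNet.edge (Sum.inr t) (Sum.inl f)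

/-- `k`-soundness of a workflow net. -/
def WorkflowNet.ksound (N : WorkflowNet P T) (k : ℕ) : Prop :=
  ∀ m, N.toPetriNet.reach (mk1 N.i k) m → N.toPetriNet.reach m (mk1 N.f k)

/-- Continuous soundness of a workflow net. -/
def WorkflowNet.csound (N : WorkflowNet P T) : Prop :=
  ∀ m : P → ℚ, N.toPetriNet.creach (mkQ N.i 1) m → N.toPetriNet.creach m (mkQ N.f 1)

/-! ### Auxiliary material for `stmt11` -/

section Aux

variable [DecidableEq T]

/-- Total effect of firing each transition `t` exactly `v t` times. -/
def effv (N : PetriNet P T) (v : T → ℕ) (p : P) : ℤ :=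
  ∑ t, (v t : ℤ) * ((N.post t p : ℤ) - (N.pre t p : ℤ))

/-- A crude cost bound: firing `v` needs at most this many tokens in any place. -/
def costv (N : PetriNet P T) (v : T → ℕ) : ℕ :=
  ∑ t, v t * (∑ p, N.pre t p)

lemma sum_mul_split {M : Type} [CommSemiring M] (v v' : T → ℕ) (t : T)
    (h : ∀ s, v s = v' s + if s = t then 1 else 0) (c : T → M) :
    (∑ s, (v s : M) * c s) = (∑ s, (v' s : M) * c s) + c t := by
  have key : ∀ s : T, (v s : M) * c s = (v' s : M) * c s + (if s = t then c s else 0) := by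
    intro s
    by_cases hs : s = t
    · subst hs
      rw [h s, if_pos rfl, if_pos rfl]
      push_cast
      ring
    · rw [h s, if_neg hs, if_neg hs]
      push_cast
      ring
  rw [Finset.sum_congr rfl fun s _ => key s, Finset.sum_add_distrib,
    Finset.sum_ite_eq' Finset.univ t]
  simp

lemma effv_sub (N : PetriNet P T) {v w : T → ℕ} (h : ∀ t, v t ≤ w t) (p : P) :
    effv N (fun t => w t - v t) p = effv N w p - effv N v p := by
  unfold effv
  rw [← Finset.sum_sub_distrib]
  refine Finset.sum_congr rfl fun t _ => ?_
  have h1 : ((w t - v t : ℕ) : ℤ) = (w t : ℤ) - (v t : ℤ) := by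
    have := h t; omega
  rw [h1]; ring

lemma zreach_effv (N : PetriNet P T) {a b : P → ℤ} (h : N.zreach a b) :
    ∃ v : T → ℕ, ∀ p, b p = a p + effv N v p := by
  induction h with
  | refl => exact ⟨fun _ => 0, fun p => by simp [effv]⟩
  | tail _ hbc ih =>
    obtain ⟨v, hv⟩ := ih
    obtain ⟨t, ht⟩ := hbc
    refine ⟨fun s => v s + (if s = t then 1 else 0), fun p => ?_⟩
    have hsplit : effv N (fun s => v s + (if s = t then 1 else 0)) p
        = effv N v p + ((N.post t p : ℤ) - (N.pre t p : ℤ)) := by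
      unfold effv
      exact sum_mul_split (fun s => v s + (if s = t then 1 else 0)) v t
        (fun s => rfl) (fun s => (N.post s p : ℤ) - (N.pre s p : ℤ))
    rw [ht p, hv p, hsplit]
    ring

lemma pump (N : PetriNet P T) (l : ℚ) (hl0 : 0 < l) (hl1 : l ≤ 1) :
    ∀ (n : ℕ) (v : T → ℕ), (∑ t, v t) = n → ∀ m : P → ℚ,
      (∀ p, l * (costv N v : ℚ) ≤ m p) →
      N.creach m (fun p => m p + l * (effv N v p : ℚ)) := by
  intro n
  induction n with
  | zero =>
    intro v hv m _
    have hv0 : ∀ t, v t = 0 := by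
      intro t
      have := Finset.sum_eq_zero_iff.mp hv t (Finset.mem_univ t)
      exact this
    have : (fun p => m p + l * (effv N v p : ℚ)) = m := by
      funext p; simp [effv, hv0]
    rw [this]
    exact Relation.ReflTransGen.refl
  | succ n ih =>
    intro v hv m hm
    have hex : ∃ t, v t ≠ 0 := by
      by_contra hc
      push_neg at hc
      simp only [hc, Finset.sum_const_zero] at hv
      omega
    obtain ⟨t, ht⟩ := hex
    set v' : T → ℕ := fun s => v s - (if s = t then 1 else 0) with hv'def
    have hpt : ∀ s, v s = v' s + (if s = t then 1 else 0) := by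
      intro s
      by_cases hs : s = t <;> simp [hv'def, hs] <;> omega
    have hsum' : (∑ s, v' s) = n := by
      have : (∑ s, v s) = (∑ s, v' s) + (∑ s, if s = t then 1 else 0) := by
        rw [← Finset.sum_add_distrib]
        exact Finset.sum_congr rfl fun s _ => hpt s
      rw [Finset.sum_ite_eq' Finset.univ t (fun _ => 1)] at this
      simp at this
      omega
    have hcost : costv N v = costv N v' + (∑ p, N.pre t p) := by
      unfold costv
      exact sum_mul_split v v' t hpt (fun s => ∑ p, N.pre s p)
    have heff : ∀ p, effv N v p = effv N v' p + ((N.post t p : ℤ) - (N.pre t p : ℤ)) := by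
      intro p
      unfold effv
      exact sum_mul_split v v' t hpt (fun s => (N.post s p : ℤ) - (N.pre s p : ℤ))
    -- fire t once
    have hprele : ∀ p, (N.pre t p : ℚ) ≤ (costv N v : ℚ) := by
      intro p
      have h1 : N.pre t p ≤ ∑ q, N.pre t q :=
        Finset.single_le_sum (fun q _ => Nat.zero_le _) (Finset.mem_univ p)
      have h2 : (∑ q, N.pre t q) ≤ v t * (∑ q, N.pre t q) :=
        Nat.le_mul_of_pos_left _ (Nat.pos_of_ne_zero ht)
      have h3 : v t * (∑ q, N.pre t q) ≤ costv N v :=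
        Finset.single_le_sum (f := fun s => v s * (∑ q, N.pre s q))
          (fun s _ => Nat.zero_le _) (Finset.mem_univ t)
      exact_mod_cast le_trans h1 (le_trans h2 h3)
    set m1 : P → ℚ := fun p => m p + l * ((N.post t p : ℚ) - (N.pre t p : ℚ)) with hm1def
    have hstep : N.cfires m m1 := by
      refine ⟨t, l, hl0, hl1, fun p => ?_, fun p => rfl⟩
      calc l * (N.pre t p : ℚ) ≤ l * (costv N v : ℚ) :=
            mul_le_mul_of_nonneg_left (hprele p) hl0.le
        _ ≤ m p := hm p
    have hm1 : ∀ p, l * (costv N v' : ℚ) ≤ m1 p := by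
      intro p
      have h1 : (costv N v' : ℚ) = (costv N v : ℚ) - (∑ q, N.pre t q : ℚ) := by
        rw [hcost]; push_cast; ring
      have h2 : (N.pre t p : ℚ) ≤ ((∑ q, N.pre t q : ℕ) : ℚ) := by
        exact_mod_cast Finset.single_le_sum (f := fun q => N.pre t q)
          (fun q _ => Nat.zero_le _) (Finset.mem_univ p)
      have h3 : (0:ℚ) ≤ l * (N.post t p : ℚ) := by positivity
      have := hm p
      rw [hm1def, h1]
      push_cast at h2 ⊢
      nlinarith
    have htail := ih v' hsum' m1 hm1
    have hfinal : (fun p => m1 p + l * (effv N v' p : ℚ))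
        = (fun p => m p + l * (effv N v p : ℚ)) := by
      funext p
      rw [hm1def, heff p]
      push_cast
      ring
    rw [hfinal] at htail
    exact Relation.ReflTransGen.head hstep htail

end Aux

lemma reach_add (N : PetriNet P T) {a b : P → ℕ} (h : N.reach a b) (c : P → ℕ) :
    N.reach (fun p => a p + c p) (fun p => b p + c p) := by
  induction h with
  | refl => exact Relation.ReflTransGen.refl
  | @tail mb mc hr hst ih =>
    obtain ⟨t, hen, heq⟩ := hst
    refine ih.tail ⟨t, fun p => le_trans (hen p) (Nat.le_add_right _ _), fun p => ?_⟩
    show mc p + c p = (mb p + c p) + N.post t p - N.pre t p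
    have h1 := hen p
    have h2 := heq p
    omega

lemma reach_i_le (N : WorkflowNet P T) {a b : P → ℕ} (h : N.toPetriNet.reach a b) :
    b N.i ≤ a N.i := by
  induction h with
  | refl => exact le_refl _
  | tail _ hst ih =>
    obtain ⟨t, hen, heq⟩ := hst
    have h1 := heq N.i
    have h2 := N.no_into_initial t
    omega

lemma exists_pos_marking (N : WorkflowNet P T)
    (hnr : ∀ p : P, ∃ k : ℕ, 0 < k ∧ ∃ m : P → ℕ,
      N.toPetriNet.reach (mk1 N.i k) m ∧ 1 ≤ m p) :
    ∃ K : ℕ, 1 ≤ K ∧ ∃ mm : P → ℕ, N.toPetriNet.reach (mk1 N.i K) mm ∧ ∀ p, 1 ≤ mm p := by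
  have key : ∀ s : Finset P, ∃ K : ℕ, ∃ mm : P → ℕ,
      N.toPetriNet.reach (mk1 N.i K) mm ∧ ∀ p ∈ s, 1 ≤ mm p := by
    intro s
    induction s using Finset.induction with
    | empty => exact ⟨0, mk1 N.i 0, Relation.ReflTransGen.refl, by simp⟩
    | @insert p s hp ih =>
      obtain ⟨K, mm, hre, hpos⟩ := ih
      obtain ⟨k, hk0, mp, hrep, hmp⟩ := hnr p
      refine ⟨K + k, fun q => mm q + mp q, ?_, ?_⟩
      · have hsplit : mk1 N.i (K + k) = fun q => mk1 N.i K q + mk1 N.i k q := by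
          funext q; by_cases hq : q = N.i <;> simp [mk1, hq]
        have h1 : N.toPetriNet.reach (fun q => mk1 N.i K q + mk1 N.i k q)
            (fun q => mm q + mk1 N.i k q) := reach_add N.toPetriNet hre _
        have h2 : N.toPetriNet.reach (fun q => mk1 N.i k q + mm q)
            (fun q => mp q + mm q) := reach_add N.toPetriNet hrep _
        have hcomm1 : (fun q => mm q + mk1 N.i k q) = (fun q => mk1 N.i k q + mm q) := by
          funext q; ring
        have hcomm2 : (fun q => mp q + mm q) = (fun q => mm q + mp q) := by
          funext q; ring
        rw [hsplit]
        exact h1.trans (by rw [hcomm1]; rw [hcomm2] at h2; exact h2)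
      · intro q hq
        show 1 ≤ mm q + mp q
        rcases Finset.mem_insert.mp hq with rfl | hq
        · have := hmp; omega
        · have := hpos q hq; omega
  obtain ⟨K, mm, hre, hpos⟩ := key Finset.univ
  have hK : 1 ≤ K := by
    have h1 : 1 ≤ mm N.i := hpos N.i (Finset.mem_univ _)
    have h2 := reach_i_le N hre
    simp [mk1] at h2
    omega
  exact ⟨K, hK, mm, hre, fun p => hpos p (Finset.mem_univ p)⟩

lemma reach_creach_div (N : PetriNet P T) {a b : P → ℕ} (h : N.reach a b)
    (K : ℕ) (hK : 1 ≤ K) :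
    N.creach (fun p => (a p : ℚ) / K) (fun p => (b p : ℚ) / K) := by
  have hK0 : (0:ℚ) < K := by exact_mod_cast hK
  induction h with
  | refl => exact Relation.ReflTransGen.refl
  | @tail mb mc hr hst ih =>
    obtain ⟨t, hen, heq⟩ := hst
    refine ih.tail ⟨t, 1 / K, by positivity, ?_, fun p => ?_, fun p => ?_⟩
    · rw [div_le_one hK0]; exact_mod_cast hK
    · show 1 / (K:ℚ) * (N.pre t p : ℚ) ≤ (mb p : ℚ) / K
      rw [div_mul_eq_mul_div, one_mul]
      gcongr
      exact_mod_cast hen p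
    · show (mc p : ℚ) / K = (mb p : ℚ) / K + 1 / K * ((N.post t p : ℚ) - (N.pre t p : ℚ))
      have h3 : (mc p : ℚ) + (N.pre t p : ℚ) = (mb p : ℚ) + (N.post t p : ℚ) := by
        have h4 : mc p + N.pre t p = mb p + N.post t p := by
          have h5 := heq p
          have h6 := hen p
          omega
        exact_mod_cast h4
      field_simp
      linarith

lemma creach_add (N : PetriNet P T) {a b : P → ℚ} (h : N.creach a b)
    (x : P → ℚ) (hx : ∀ p, 0 ≤ x p) :
    N.creach (fun p => a p + x p) (fun p => b p + x p) := by
  induction h with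
  | refl => exact Relation.ReflTransGen.refl
  | @tail mb mc hr hst ih =>
    obtain ⟨t, l, hl0, hl1, hen, heq⟩ := hst
    refine ih.tail ⟨t, l, hl0, hl1, fun p => ?_, fun p => ?_⟩
    · show l * (N.pre t p : ℚ) ≤ mb p + x p
      have h1 := hen p; have h2 := hx p; linarith
    · show mc p + x p = (mb p + x p) + l * ((N.post t p : ℚ) - (N.pre t p : ℚ))
      rw [heq p]; ring

lemma creach_f_mono (N : WorkflowNet P T) {a b : P → ℚ}
    (h : N.toPetriNet.creach a b) : a N.f ≤ b N.f := by
  induction h with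
  | refl => exact le_refl _
  | @tail mb mc hr hst ih =>
    obtain ⟨t, l, hl0, hl1, hen, heq⟩ := hst
    have h1 := heq N.f
    rw [N.no_from_final t] at h1
    have h2 : (0:ℚ) ≤ l * ((N.post t N.f : ℚ) - 0) := by
      rw [sub_zero]; positivity
    push_cast at h1
    linarith

lemma exists_post_pos (N : WorkflowNet P T) (t : T) : ∃ p, 0 < N.post t p := by
  have h := (N.trans_on_path t).2
  rcases h.cases_head with heq | ⟨c, hc, _⟩
  · exact absurd heq (by simp)
  · cases c with
    | inl p => exact ⟨p, hc⟩
    | inr t' => exact absurd hc (by simp [PetriNet.edge])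

lemma exists_mono_subseq (f : ℕ → ℕ) :
    ∃ φ : ℕ → ℕ, StrictMono φ ∧ ∀ a b, a ≤ b → f (φ a) ≤ f (φ b) := by
  have hw : (Set.univ : Set ℕ).IsWF := Set.isWF_univ_iff.mpr inferInstance
  obtain ⟨g, hg⟩ := hw.isPWO.exists_monotone_subseq (f := f) (fun n => Set.mem_univ _)
  exact ⟨g, g.strictMono, fun a b hab => hg hab⟩

lemma list_mono_subseq {ι : Type} (L : List ι) (F : ℕ → ι → ℕ) :
    ∃ φ : ℕ → ℕ, StrictMono φ ∧ ∀ i ∈ L, ∀ a b, a ≤ b → F (φ a) i ≤ F (φ b) i := by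
  induction L with
  | nil => exact ⟨id, strictMono_id, by simp⟩
  | cons i L ih =>
    obtain ⟨φ, hφ, hm⟩ := ih
    obtain ⟨ψ, hψ, hmi⟩ := exists_mono_subseq (fun n => F (φ n) i)
    refine ⟨φ ∘ ψ, hφ.comp hψ, ?_⟩
    intro j hj a b hab
    rcases List.mem_cons.mp hj with rfl | hj
    · exact hmi a b hab
    · exact hm j hj _ _ (hψ.monotone hab)

theorem stmt11 (N : WorkflowNet P T)
    (hnr : ∀ p : P, ∃ k : ℕ, 0 < k ∧ ∃ m : P → ℕ,
      N.toPetriNet.reach (mk1 N.i k) m ∧ 1 ≤ m p)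
    (m : P → ℕ) (hub : ¬ N.toPetriNet.zbounded m) :
    ¬ N.csound := by
  intro hcs
  classical
  rw [PetriNet.zbounded] at hub
  push_neg at hub
  choose g hg1 hg2 hg3 using hub
  choose v hv using fun n => zreach_effv N.toPetriNet (hg1 n)
  set H : ℕ → (P ⊕ T) → ℕ := fun n => Sum.elim (fun p => (g n p).toNat) (v n) with hHdef
  obtain ⟨φ, hφ, hmono⟩ := list_mono_subseq (Finset.univ : Finset (P ⊕ T)).toList H
  have hmem : ∀ x : P ⊕ T, x ∈ (Finset.univ : Finset (P ⊕ T)).toList := fun x => by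
    simp [Finset.mem_toList]
  set a : ℕ := φ 0 with hadef
  set M : ℕ := Finset.univ.sup (fun p : P => (g a p).toNat) with hMdef
  set n₀ : ℕ := M + 1 with hn₀def
  set b : ℕ := φ n₀ with hbdef
  obtain ⟨p₀, hp₀⟩ := hg3 b
  have hφn : n₀ ≤ b := by rw [hbdef]; exact hφ.le_apply
  have hgab : ∀ q, g a q ≤ g b q := by
    intro q
    have h1 := hmono (Sum.inl q) (hmem _) 0 n₀ (Nat.zero_le _)
    simp only [hHdef, Sum.elim_inl] at h1
    rw [← hadef, ← hbdef] at h1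
    have h2 := hg2 a q
    have h3 := hg2 b q
    omega
  have hvab : ∀ t, v a t ≤ v b t := by
    intro t
    have h1 := hmono (Sum.inr t) (hmem _) 0 n₀ (Nat.zero_le _)
    simp only [hHdef, Sum.elim_inr] at h1
    rw [← hadef, ← hbdef] at h1
    exact h1
  have hstrict : g a p₀ < g b p₀ := by
    have hMle : (g a p₀).toNat ≤ M := by
      rw [hMdef]; exact Finset.le_sup (f := fun p : P => (g a p).toNat) (Finset.mem_univ p₀)
    have h2 := hg2 a p₀
    have hbn : ((n₀ : ℕ) : ℤ) ≤ ((b : ℕ) : ℤ) := by exact_mod_cast hφn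
    omega
  set d : T → ℕ := fun t => v b t - v a t with hddef
  have hde : ∀ p, effv N.toPetriNet d p = g b p - g a p := by
    intro p
    have hb := hv b p
    have ha := hv a p
    rw [hddef, effv_sub N.toPetriNet hvab p]
    omega
  have hd0 : ∀ p, 0 ≤ effv N.toPetriNet d p := by
    intro p; rw [hde p]; have := hgab p; omega
  have hdpos : 0 < effv N.toPetriNet d p₀ := by
    rw [hde p₀]; omega
  obtain ⟨K, hK1, mm, hmmreach, hmmpos⟩ := exists_pos_marking N hnr
  have hK0 : (0:ℚ) < K := by exact_mod_cast hK1
  set m₀ : P → ℚ := fun p => (mm p : ℚ) / K with hm₀def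
  have h1 : N.toPetriNet.creach (mkQ N.i 1) m₀ := by
    have hmk : (mkQ N.i 1) = fun p => ((mk1 N.i K p : ℕ) : ℚ) / K := by
      funext p
      by_cases hp : p = N.i <;> simp [mkQ, mk1, hp]
      field_simp
    rw [hmk, hm₀def]
    exact reach_creach_div N.toPetriNet hmmreach K hK1
  set C : ℕ := costv N.toPetriNet d with hCdef
  set l : ℚ := 1 / (K * (C + 1)) with hldef
  have hl0 : 0 < l := by rw [hldef]; positivity
  have hl1 : l ≤ 1 := by
    rw [hldef, div_le_one (by positivity)]
    have h1 : (1:ℚ) ≤ (K:ℚ) := by exact_mod_cast hK1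
    have h2 : (0:ℚ) ≤ (C:ℚ) := by positivity
    nlinarith
  have hbound : ∀ p, l * (C : ℚ) ≤ m₀ p := by
    intro p
    have hmmp : (1:ℚ) ≤ (mm p : ℚ) := by exact_mod_cast hmmpos p
    have h1 : (1:ℚ)/K ≤ m₀ p := by
      rw [hm₀def]
      show (1:ℚ)/K ≤ (mm p : ℚ)/K
      gcongr
    have h2 : l * (C:ℚ) ≤ 1/K := by
      rw [hldef, div_mul_eq_mul_div, one_mul, div_le_div_iff₀ (by positivity) hK0]
      have hC0 : (0:ℚ) ≤ (C:ℚ) := by positivity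
      nlinarith
    linarith
  have h2 : N.toPetriNet.creach m₀ (fun p => m₀ p + l * (effv N.toPetriNet d p : ℚ)) :=
    pump N.toPetriNet l hl0 hl1 (∑ t, d t) d rfl m₀ (by rw [← hCdef]; exact hbound)
  have h3 : N.toPetriNet.creach m₀ (mkQ N.f 1) := hcs m₀ h1
  set x : P → ℚ := fun p => l * (effv N.toPetriNet d p : ℚ) with hxdef
  have hx : ∀ p, 0 ≤ x p := by
    intro p
    have : (0:ℚ) ≤ (effv N.toPetriNet d p : ℚ) := by exact_mod_cast hd0 p
    exact mul_nonneg hl0.le this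
  have h4 := creach_add N.toPetriNet h3 x hx
  set μ : P → ℚ := fun p => mkQ N.f 1 p + x p with hμdef
  have h5 : N.toPetriNet.creach (mkQ N.i 1) μ := h1.trans (h2.trans h4)
  have h6 : N.toPetriNet.creach μ (mkQ N.f 1) := hcs μ h5
  rcases h6.cases_tail with heqq | ⟨c, hc, hstep⟩
  · have hxp : 0 < x p₀ := by
      have : (0:ℚ) < (effv N.toPetriNet d p₀ : ℚ) := by exact_mod_cast hdpos
      exact mul_pos hl0 this
    have hpe := congrFun heqq p₀
    simp only [hμdef] at hpe
    linarith [hpe]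
  · obtain ⟨t, l', hl'0, hl'1, hen, heqf⟩ := hstep
    obtain ⟨q, hq⟩ := exists_post_pos N t
    have hfq := heqf q
    have hcq := hen q
    have hpos : 0 < mkQ N.f 1 q := by
      have hpq : (1:ℚ) ≤ (N.post t q : ℚ) := by exact_mod_cast hq
      nlinarith [mul_le_mul_of_nonneg_left hpq hl'0.le]
    have hqf : q = N.f := by
      by_contra hne
      simp [mkQ, hne] at hpos
    subst hqf
    have hcf : μ N.f ≤ c N.f := creach_f_mono N hc
    have hμf : (1:ℚ) ≤ μ N.f := by
      have hh := hx N.f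
      have hμeq : μ N.f = 1 + x N.f := by simp [hμdef, mkQ]
      linarith
    have hff := heqf N.f
    rw [N.no_from_final t] at hff
    have hfone : mkQ N.f 1 N.f = 1 := by simp [mkQ]
    have hpostf : (1:ℚ) ≤ (N.post t N.f : ℚ) := by exact_mod_cast hq
    have hlp : l' ≤ l' * (N.post t N.f : ℚ) :=
      le_mul_of_one_le_right hl'0.le hpostf
    rw [hfone] at hff
    push_cast at hff
    rw [sub_zero] at hff
    linarith
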